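/- arXiv:2405.13363 — 8 statements merged into one kernel-verified Lean document; each statement's English description precedes it below -/
import Mathlib

section
/- Let D be a ⟨2,2⟩ digraph and let u be a vertex of degree 2 in CCE(D). Then u has outdegree exactly 2 and indegree exactly 2 in D, and for each neighbor v of u in CCE(D), the vertices u and v have exactly one common prey and exactly one common predator in D. -/
open SimpleGraph

/-- A simple digraph given by its arc relation `A` has no loops, and every vertex has
outdegree at most 2 and indegree at most 2. -/
def IsTwoTwo {V : Type*} (A : V → V → Prop) : Prop :=
  (∀ v, ¬ A v v) ∧
  (∀ v a b c, A v a → A v b → A v c → a = b ∨ a = c ∨ b = c) ∧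
  (∀ v a b c, A a v → A b v → A c v → a = b ∨ a = c ∨ b = c)

/-- The competition-common enemy graph of a digraph with arc relation `A`. -/
def CCE {V : Type*} (A : V → V → Prop) : SimpleGraph V where
  Adj u v := u ≠ v ∧ (∃ x, A u x ∧ A v x) ∧ (∃ y, A y u ∧ A y v)
  symm := ⟨by
    rintro u v ⟨h, ⟨x, hx1, hx2⟩, ⟨y, hy1, hy2⟩⟩
    exact ⟨h.symm, ⟨x, hx2, hx1⟩, ⟨y, hy2, hy1⟩⟩⟩
  loopless := ⟨fun v h => h.1 rfl⟩

/-- The connected component `c` of `G` induces a (finite) path graph. -/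
def IsPathComponent {V : Type*} (G : SimpleGraph V) (c : G.ConnectedComponent) : Prop :=
  ∃ n : ℕ, Nonempty ((G.induce c.supp) ≃g pathGraph n)

/-- The connected component `c` of `G` induces a cycle of length at least 3. -/
def IsCycleComponent {V : Type*} (G : SimpleGraph V) (c : G.ConnectedComponent) : Prop :=
  ∃ n : ℕ, 3 ≤ n ∧ Nonempty ((G.induce c.supp) ≃g cycleGraph n)

/-- `G` is the CCE graph of some `⟨2,2⟩` digraph. -/
def IsTwoTwoCCE {V : Type*} (G : SimpleGraph V) : Prop :=
  ∃ (W : Type) (A : W → W → Prop), IsTwoTwo A ∧ Nonempty (G ≃g CCE A)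

/-- `A` is acyclic: it has no directed cycle. -/
def DigraphAcyclic {V : Type*} (A : V → V → Prop) : Prop :=
  ∀ v, ¬ Relation.TransGen A v v

/-- A `(2,2)` digraph: an acyclic `⟨2,2⟩` digraph. -/
def IsTwoTwoAcyclic {V : Type*} (A : V → V → Prop) : Prop :=
  IsTwoTwo A ∧ DigraphAcyclic A

/-- `G` is an interval graph. -/
def IsIntervalGraph {V : Type*} (G : SimpleGraph V) : Prop :=
  ∃ f : V → Set ℝ, (∀ v, ∃ a b : ℝ, f v = Set.Icc a b) ∧
    ∀ u v, u ≠ v → (G.Adj u v ↔ (f u ∩ f v).Nonempty)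

/-- `A` is a minimal `(2,2)` digraph realizing its CCE graph: no proper subdigraph on the
same vertex set has the same CCE graph. -/
def MinimalTwoTwoAcyclic {V : Type*} (A : V → V → Prop) : Prop :=
  IsTwoTwoAcyclic A ∧
    ∀ A' : V → V → Prop, (∀ u v, A' u v → A u v) → CCE A' = CCE A → ∀ u v, A u v → A' u v

theorem stmt1 {V : Type*} (A : V → V → Prop) (hA : IsTwoTwo A) (u : V)
    (hdeg : ∃ a b, a ≠ b ∧ (CCE A).Adj u a ∧ (CCE A).Adj u b) :
    (∃ a b, a ≠ b ∧ A u a ∧ A u b) ∧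
    (∃ a b, a ≠ b ∧ A a u ∧ A b u) ∧
    (∀ v, (CCE A).Adj u v →
      (∃! x, A u x ∧ A v x) ∧ (∃! y, A y u ∧ A y v)) := by
  obtain ⟨a, b, hab, hua, hub⟩ := hdeg
  obtain ⟨hA0, hout, hin⟩ := hA
  obtain ⟨hne_a, ⟨xa, hxa1, hxa2⟩, ⟨ya, hya1, hya2⟩⟩ := hua
  obtain ⟨hne_b, ⟨xb, hxb1, hxb2⟩, ⟨yb, hyb1, hyb2⟩⟩ := hub
  have hx : xa ≠ xb := by
    rintro rfl
    rcases hin xa a b u hxa2 hxb2 hxa1 with h | h | h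
    · exact hab h
    · exact hne_a h.symm
    · exact hne_b h.symm
  have hy : ya ≠ yb := by
    rintro rfl
    rcases hout ya a b u hya2 hyb2 hya1 with h | h | h
    · exact hab h
    · exact hne_a h.symm
    · exact hne_b h.symm
  refine ⟨⟨xa, xb, hx, hxa1, hxb1⟩, ⟨ya, yb, hy, hya1, hyb1⟩, ?_⟩
  intro v hv
  obtain ⟨hne_v, ⟨x, hx1, hx2⟩, ⟨y, hy1, hy2⟩⟩ := hv
  have hva : ∀ z, A v z → z = xa → v = a := by
    rintro z hz rfl
    rcases hin z u v a hxa1 hz hxa2 with h | h | h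
    · exact absurd h hne_v
    · exact absurd h hne_a
    · exact h
  have hvb : ∀ z, A v z → z = xb → v = b := by
    rintro z hz rfl
    rcases hin z u v b hxb1 hz hxb2 with h | h | h
    · exact absurd h hne_v
    · exact absurd h hne_b
    · exact h
  have hwa : ∀ z, A z v → z = ya → v = a := by
    rintro z hz rfl
    rcases hout z u v a hya1 hz hya2 with h | h | h
    · exact absurd h hne_v
    · exact absurd h hne_a
    · exact h
  have hwb : ∀ z, A z v → z = yb → v = b := by
    rintro z hz rfl
    rcases hout z u v b hyb1 hz hyb2 with h | h | h
    · exact absurd h hne_v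
    · exact absurd h hne_b
    · exact h
  constructor
  · refine ⟨x, ⟨hx1, hx2⟩, ?_⟩
    rintro x' ⟨hx'1, hx'2⟩
    by_contra hxx
    have hxmem : x = xa ∨ x = xb := by
      rcases hout u x xa xb hx1 hxa1 hxb1 with h | h | h
      · exact Or.inl h
      · exact Or.inr h
      · exact absurd h hx
    have hx'mem : x' = xa ∨ x' = xb := by
      rcases hout u x' xa xb hx'1 hxa1 hxb1 with h | h | h
      · exact Or.inl h
      · exact Or.inr h
      · exact absurd h hx
    rcases hxmem with h1 | h1 <;> rcases hx'mem with h2 | h2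
    · exact hxx (h2.trans h1.symm)
    · exact hab ((hva x hx2 h1).symm.trans (hvb x' hx'2 h2))
    · exact hab ((hva x' hx'2 h2).symm.trans (hvb x hx2 h1))
    · exact hxx (h2.trans h1.symm)
  · refine ⟨y, ⟨hy1, hy2⟩, ?_⟩
    rintro y' ⟨hy'1, hy'2⟩
    by_contra hyy
    have hymem : y = ya ∨ y = yb := by
      rcases hin u y ya yb hy1 hya1 hyb1 with h | h | h
      · exact Or.inl h
      · exact Or.inr h
      · exact absurd h hy
    have hy'mem : y' = ya ∨ y' = yb := by
      rcases hin u y' ya yb hy'1 hya1 hyb1 with h | h | h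
      · exact Or.inl h
      · exact Or.inr h
      · exact absurd h hy
    rcases hymem with h1 | h1 <;> rcases hy'mem with h2 | h2
    · exact hyy (h2.trans h1.symm)
    · exact hab ((hwa y hy2 h1).symm.trans (hwb y' hy'2 h2))
    · exact hab ((hwa y' hy'2 h2).symm.trans (hwb y hy2 h1))
    · exact hyy (h2.trans h1.symm)
end

section
/- Let D be a ⟨2,2⟩ digraph with CCE graph G, and let w be a vertex of D with two prey u and v. If u and v are not adjacent in G, then each of u and v has degree at most 1 in G. -/
open SimpleGraph

theorem stmt2 {V : Type*} (A : V → V → Prop) (hA : IsTwoTwo A) (w u v : V)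
    (hu : A w u) (hv : A w v) (huv : u ≠ v) (hnadj : ¬ (CCE A).Adj u v) :
    (∀ a b, (CCE A).Adj u a → (CCE A).Adj u b → a = b) ∧
    (∀ a b, (CCE A).Adj v a → (CCE A).Adj v b → a = b) := by
  have key : ∀ u v : V, A w u → A w v → u ≠ v → ¬ (CCE A).Adj u v →
      ∀ a b, (CCE A).Adj u a → (CCE A).Adj u b → a = b := by
    intro u v hu hv huv hnadj a b ha hb
    obtain ⟨hnea, hca, ⟨ya, hya1, hya2⟩⟩ := ha
    obtain ⟨hneb, hcb, ⟨yb, hyb1, hyb2⟩⟩ := hb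
    have hyaw : ya ≠ w := by
      rintro rfl
      rcases hA.2.1 _ u v a hu hv hya2 with h | h | h
      · exact huv h
      · exact hnea h
      · subst h
        exact hnadj ⟨hnea, hca, ya, hya1, hya2⟩
    have hybw : yb ≠ w := by
      rintro rfl
      rcases hA.2.1 _ u v b hu hv hyb2 with h | h | h
      · exact huv h
      · exact hneb h
      · subst h
        exact hnadj ⟨hneb, hcb, yb, hyb1, hyb2⟩
    rcases hA.2.2 u w ya yb hu hya1 hyb1 with h | h | h
    · exact absurd h.symm hyaw
    · exact absurd h.symm hybw
    · subst h
      rcases hA.2.1 ya u a b hya1 hya2 hyb2 with h | h | h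
      · exact absurd h hnea
      · exact absurd h hneb
      · exact h
  exact ⟨key u v hu hv huv hnadj, key v u hv hu huv.symm (fun h => hnadj h.symm)⟩
end

section
/- No nontrivial path (a path graph on at least 2 vertices) is the CCE graph of any ⟨2,2⟩ digraph. -/
open SimpleGraph

section AuxProof
variable {W : Type*}

private lemma flip_twoTwo {A : W → W → Prop} (hA : IsTwoTwo A) :
    IsTwoTwo (fun a b => A b a) :=
  ⟨hA.1, hA.2.2, hA.2.1⟩

/-- If two distinct "non-sources" exist, contradiction by pigeonhole. -/
private lemma pigeon_aux (A : W → W → Prop) (hA : IsTwoTwo A) {n : ℕ} (hn : 3 ≤ n) (w : ℕ → W)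
    (hinj : ∀ i j, i < n → j < n → w i = w j → i = j)
    (hadj : ∀ k, k + 1 < n →
      (∃ x, A (w k) x ∧ A (w (k+1)) x) ∧ (∃ y, A y (w k) ∧ A y (w (k+1))))
    (hsurj : ∀ x : W, ∃ k, k < n ∧ x = w k)
    (u u' : W)
    (hu : ∀ i, i + 1 < n → ¬ (A u (w i) ∧ A u (w (i+1))))
    (hu' : ∀ i, i + 1 < n → ¬ (A u' (w i) ∧ A u' (w (i+1)))) : u = u' := by
  by_contra hne
  have hout : ∀ x i a, i + 1 < n → A x (w i) → A x (w (i+1)) → A x a →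
      a = w i ∨ a = w (i+1) := by
    intro x i a hi h1 h2 h3
    rcases hA.2.1 x a (w i) (w (i+1)) h3 h1 h2 with h | h | h
    · exact Or.inl h
    · exact Or.inr h
    · exact absurd (hinj i (i+1) (by omega) hi h) (by omega)
  have Hs : ∀ i : ℕ, ∃ y, i + 1 < n → A y (w i) ∧ A y (w (i+1)) := by
    intro i
    by_cases hi : i + 1 < n
    · obtain ⟨y, hy⟩ := (hadj i hi).2
      exact ⟨y, fun _ => hy⟩
    · exact ⟨w 0, fun h => absurd h hi⟩
  choose s hs using Hs
  have hsinj : ∀ i j, i + 1 < n → j + 1 < n → s i = s j → i = j := by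
    intro i j hi hj he
    have h1 := (hs i hi).1
    have h2 := (hs i hi).2
    rw [he] at h1 h2
    have e1 := hout (s j) j (w i) hj (hs j hj).1 (hs j hj).2 h1
    have e2 := hout (s j) j (w (i+1)) hj (hs j hj).1 (hs j hj).2 h2
    have e1' : i = j ∨ i = j + 1 := by
      rcases e1 with h | h
      · exact Or.inl (hinj _ _ (by omega) (by omega) h)
      · exact Or.inr (hinj _ _ (by omega) (by omega) h)
    have e2' : i + 1 = j ∨ i + 1 = j + 1 := by
      rcases e2 with h | h
      · exact Or.inl (hinj _ _ (by omega) (by omega) h)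
      · exact Or.inr (hinj _ _ (by omega) (by omega) h)
    omega
  obtain ⟨p, hp, hep⟩ := hsurj u
  obtain ⟨p', hp', hep'⟩ := hsurj u'
  have hpp' : p ≠ p' := fun h => hne (by rw [hep, hep', h])
  have Hρ : ∀ i : ℕ, ∃ q, i + 1 < n → (q < n ∧ q ≠ p ∧ q ≠ p' ∧ s i = w q) := by
    intro i
    by_cases hi : i + 1 < n
    · obtain ⟨q, hq, he⟩ := hsurj (s i)
      refine ⟨q, fun _ => ⟨hq, ?_, ?_, he⟩⟩
      · rintro rfl
        exact hu i hi (by rw [hep, ← he]; exact hs i hi)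
      · rintro rfl
        exact hu' i hi (by rw [hep', ← he]; exact hs i hi)
    · exact ⟨0, fun h => absurd h hi⟩
  choose ρ hρ using Hρ
  have hmap : ∀ i ∈ Finset.range (n-1), ρ i ∈ ((Finset.range n).erase p).erase p' := by
    intro i hi
    simp only [Finset.mem_range] at hi
    have hi' : i + 1 < n := by omega
    obtain ⟨h1, h2, h3, h4⟩ := hρ i hi'
    exact Finset.mem_erase.2 ⟨h3, Finset.mem_erase.2 ⟨h2, Finset.mem_range.2 h1⟩⟩
  have hinjρ : Set.InjOn ρ (Finset.range (n-1)) := by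
    intro i hi j hj he
    simp only [Finset.coe_range, Set.mem_Iio] at hi hj
    have hi' : i + 1 < n := by omega
    have hj' : j + 1 < n := by omega
    have : s i = s j := by rw [(hρ i hi').2.2.2, (hρ j hj').2.2.2, he]
    exact hsinj i j hi' hj' this
  have hcard := Finset.card_le_card_of_injOn ρ hmap hinjρ
  rw [Finset.card_range, Finset.card_erase_of_mem
      (Finset.mem_erase.2 ⟨hpp'.symm, Finset.mem_range.2 hp'⟩),
    Finset.card_erase_of_mem (Finset.mem_range.2 hp), Finset.card_range] at hcard
  omega

/-- An endpoint that is a "sink" has a non-source in-neighbour. -/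
private lemma nsrc_aux (A : W → W → Prop) (hA : IsTwoTwo A) {n : ℕ} (hn : 3 ≤ n) (w : ℕ → W)
    (hinj : ∀ i j, i < n → j < n → w i = w j → i = j)
    (hadj : ∀ k, k + 1 < n →
      (∃ x, A (w k) x ∧ A (w (k+1)) x) ∧ (∃ y, A y (w k) ∧ A y (w (k+1))))
    (hk0 : ∃ i, i + 1 < n ∧ A (w i) (w 0) ∧ A (w (i+1)) (w 0)) :
    ∃ u, A u (w 0) ∧ ∀ i, i + 1 < n → ¬ (A u (w i) ∧ A u (w (i+1))) := by
  classical
  have hout : ∀ x i a, i + 1 < n → A x (w i) → A x (w (i+1)) → A x a →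
      a = w i ∨ a = w (i+1) := by
    intro x i a hi h1 h2 h3
    rcases hA.2.1 x a (w i) (w (i+1)) h3 h1 h2 with h | h | h
    · exact Or.inl h
    · exact Or.inr h
    · exact absurd (hinj i (i+1) (by omega) hi h) (by omega)
  obtain ⟨i, hi, h1, h2⟩ := hk0
  by_cases c1 : ∀ j, j + 1 < n → ¬ (A (w i) (w j) ∧ A (w i) (w (j+1)))
  · exact ⟨w i, h1, c1⟩
  by_cases c2 : ∀ j, j + 1 < n → ¬ (A (w (i+1)) (w j) ∧ A (w (i+1)) (w (j+1)))
  · exact ⟨w (i+1), h2, c2⟩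
  exfalso
  push_neg at c1 c2
  obtain ⟨j, hj, d1, d2⟩ := c1
  obtain ⟨j', hj', d1', d2'⟩ := c2
  -- A (w i) (w 0) along with out-neighbourhood {w j, w (j+1)} forces j = 0
  have hj0 : j = 0 := by
    rcases hout (w i) j (w 0) hj d1 d2 h1 with h | h
    · exact (hinj 0 j (by omega) (by omega) h).symm
    · have := hinj 0 (j+1) (by omega) (by omega) h
      omega
  have hj0' : j' = 0 := by
    rcases hout (w (i+1)) j' (w 0) hj' d1' d2' h2 with h | h
    · exact (hinj 0 j' (by omega) (by omega) h).symm
    · have := hinj 0 (j'+1) (by omega) (by omega) h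
      omega
  subst hj0; subst hj0'
  -- so both w i and w (i+1) have out-neighbourhood exactly {w 0, w 1}
  -- a common in-neighbour y of w 1 and w 2 must be one of them, but then A y (w 2) fails
  obtain ⟨y, hy1, hy2⟩ := (hadj 1 (by omega)).2
  have hyin : y = w i ∨ y = w (i+1) := by
    rcases hA.2.2 (w 1) y (w i) (w (i+1)) hy1 d2 d2' with h | h | h
    · exact Or.inl h
    · exact Or.inr h
    · exact absurd (hinj i (i+1) (by omega) hi h) (by omega)
  have : w 2 = w 0 ∨ w 2 = w (0+1) := by
    rcases hyin with h' | h'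
    · rw [h'] at hy2
      exact hout (w i) 0 (w 2) (by omega) d1 d2 hy2
    · rw [h'] at hy2
      exact hout (w (i+1)) 0 (w 2) (by omega) d1' d2' hy2
  rcases this with h | h
  · exact absurd (hinj 2 0 (by omega) (by omega) h) (by omega)
  · exact absurd (hinj 2 (0+1) (by omega) (by omega) h) (by omega)

private lemma deg_aux (A : W → W → Prop) (hA : IsTwoTwo A) {n : ℕ} (hn : 3 ≤ n) (w : ℕ → W)
    (hinj : ∀ i j, i < n → j < n → w i = w j → i = j)
    (hadj : ∀ k, k + 1 < n →
      (∃ x, A (w k) x ∧ A (w (k+1)) x) ∧ (∃ y, A y (w k) ∧ A y (w (k+1))))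
    (hsurj : ∀ x : W, ∃ k, k < n ∧ x = w k)
    (h0 : ∀ i, i + 1 < n → ¬ (A (w 0) (w i) ∧ A (w 0) (w (i+1)))) : False := by
  -- out-neighborhood exactness
  have hout : ∀ x i a, i + 1 < n → A x (w i) → A x (w (i+1)) → A x a →
      a = w i ∨ a = w (i+1) := by
    intro x i a hi h1 h2 h3
    rcases hA.2.1 x a (w i) (w (i+1)) h3 h1 h2 with h | h | h
    · exact Or.inl h
    · exact Or.inr h
    · exact absurd (hinj i (i+1) (by omega) hi h) (by omega)
  -- choose a source for each edge
  have Hs : ∀ i : ℕ, ∃ y, i + 1 < n → A y (w i) ∧ A y (w (i+1)) := by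
    intro i
    by_cases hi : i + 1 < n
    · obtain ⟨y, hy⟩ := (hadj i hi).2
      exact ⟨y, fun _ => hy⟩
    · exact ⟨w 0, fun h => absurd h hi⟩
  choose s hs using Hs
  have hs0 : ∀ i, i + 1 < n → s i ≠ w 0 := fun i hi he => h0 i hi (he ▸ hs i hi)
  have hsinj : ∀ i j, i + 1 < n → j + 1 < n → s i = s j → i = j := by
    intro i j hi hj he
    have h1 := (hs i hi).1
    have h2 := (hs i hi).2
    rw [he] at h1 h2
    have e1 := hout (s j) j (w i) hj (hs j hj).1 (hs j hj).2 h1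
    have e2 := hout (s j) j (w (i+1)) hj (hs j hj).1 (hs j hj).2 h2
    have e1' : i = j ∨ i = j + 1 := by
      rcases e1 with h | h
      · exact Or.inl (hinj _ _ (by omega) (by omega) h)
      · exact Or.inr (hinj _ _ (by omega) (by omega) h)
    have e2' : i + 1 = j ∨ i + 1 = j + 1 := by
      rcases e2 with h | h
      · exact Or.inl (hinj _ _ (by omega) (by omega) h)
      · exact Or.inr (hinj _ _ (by omega) (by omega) h)
    omega
  -- the vertex index each source lands on
  have Hρ : ∀ i : ℕ, ∃ p, i + 1 < n → (p < n ∧ 1 ≤ p ∧ s i = w p) := by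
    intro i
    by_cases hi : i + 1 < n
    · obtain ⟨p, hp, he⟩ := hsurj (s i)
      refine ⟨p, fun _ => ⟨hp, ?_, he⟩⟩
      rcases Nat.eq_zero_or_pos p with rfl | h
      · exact absurd he (hs0 i hi)
      · exact h
    · exact ⟨0, fun h => absurd h hi⟩
  choose ρ hρ using Hρ
  -- pigeonhole: every w k (1 ≤ k < n) is a source
  have hsurjρ : ∀ k, 1 ≤ k → k < n → ∃ i, i + 1 < n ∧ s i = w k := by
    intro k hk1 hkn
    by_contra hc
    push_neg at hc
    have hmap : ∀ i ∈ Finset.range (n-1), ρ i ∈ (Finset.Ico 1 n).erase k := by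
      intro i hi
      simp only [Finset.mem_range] at hi
      have hi' : i + 1 < n := by omega
      obtain ⟨h1, h2, h3⟩ := hρ i hi'
      refine Finset.mem_erase.2 ⟨fun he => hc i hi' (he ▸ h3), Finset.mem_Ico.2 ⟨h2, h1⟩⟩
    have hinjρ : Set.InjOn ρ (Finset.range (n-1)) := by
      intro i hi j hj he
      simp only [Finset.coe_range, Set.mem_Iio] at hi hj
      have hi' : i + 1 < n := by omega
      have hj' : j + 1 < n := by omega
      have : s i = s j := by
        rw [(hρ i hi').2.2, (hρ j hj').2.2, he]
      exact hsinj i j hi' hj' this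
    have := Finset.card_le_card_of_injOn ρ hmap hinjρ
    rw [Finset.card_range, Finset.card_erase_of_mem (Finset.mem_Ico.2 ⟨hk1, hkn⟩),
      Nat.card_Ico] at this
    omega
  -- σ k : the edge whose source is w k
  have Hσ : ∀ k : ℕ, ∃ i, (1 ≤ k ∧ k < n) → (i + 1 < n ∧ s i = w k) := by
    intro k
    by_cases hk : 1 ≤ k ∧ k < n
    · obtain ⟨i, hi⟩ := hsurjρ k hk.1 hk.2
      exact ⟨i, fun _ => hi⟩
    · exact ⟨0, fun h => absurd h hk⟩
  choose σ hσ using Hσ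
  have hσA : ∀ k, 1 ≤ k → k < n → A (w k) (w (σ k)) ∧ A (w k) (w (σ k + 1)) ∧ σ k + 1 < n := by
    intro k h1 h2
    obtain ⟨hlt, he⟩ := hσ k ⟨h1, h2⟩
    have h := hs (σ k) hlt
    rw [he] at h
    exact ⟨h.1, h.2, hlt⟩
  have hσinj : ∀ k k', 1 ≤ k → k < n → 1 ≤ k' → k' < n → σ k = σ k' → k = k' := by
    intro k k' a b c d he
    have e1 := (hσ k ⟨a, b⟩).2
    have e2 := (hσ k' ⟨c, d⟩).2
    rw [he, e2] at e1
    exact (hinj k' k d b e1).symm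
  have hloop : ∀ k, 1 ≤ k → k < n → σ k ≠ k ∧ σ k + 1 ≠ k := by
    intro k h1 h2
    obtain ⟨a1, a2, hlt⟩ := hσA k h1 h2
    constructor
    · intro he
      rw [he] at a1
      exact hA.1 _ a1
    · intro he
      rw [he] at a2
      exact hA.1 _ a2
  have hstep : ∀ k, 1 ≤ k → k + 1 < n → σ (k+1) = σ k + 1 ∨ σ k = σ (k+1) + 1 := by
    intro k h1 h2
    obtain ⟨x, hx1, hx2⟩ := (hadj k h2).1
    obtain ⟨a1, a2, hb⟩ := hσA k h1 (by omega)
    obtain ⟨b1, b2, hb'⟩ := hσA (k+1) (by omega) h2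
    have e1 := hout (w k) (σ k) x hb a1 a2 hx1
    have e2 := hout (w (k+1)) (σ (k+1)) x hb' b1 b2 hx2
    have hne : σ k ≠ σ (k+1) := fun he => by
      have := hσinj k (k+1) h1 (by omega) (by omega) h2 he
      omega
    have key : σ k = σ (k+1) ∨ σ k = σ (k+1) + 1 ∨ σ k + 1 = σ (k+1) ∨ σ k + 1 = σ (k+1) + 1 := by
      rcases e1 with h | h <;> rcases e2 with h' | h' <;> rw [h] at h'
      · exact Or.inl (hinj _ _ (by omega) (by omega) h')
      · exact Or.inr (Or.inl (hinj _ _ (by omega) (by omega) h'))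
      · exact Or.inr (Or.inr (Or.inl (hinj _ _ (by omega) (by omega) h')))
      · exact Or.inr (Or.inr (Or.inr (hinj _ _ (by omega) (by omega) h')))
    omega
  -- adjacent steps are equal
  have hconst : ∀ k, 1 ≤ k → k + 1 + 1 < n → σ (k+1) = σ k + 1 → σ (k+1+1) = σ (k+1) + 1 := by
    intro k h1 h2 hup
    rcases hstep (k+1) (by omega) (by omega) with h | h
    · exact h
    · have heq : σ (k+1+1) = σ k := by omega
      have := hσinj (k+1+1) k (by omega) (by omega) h1 (by omega) heq
      omega
  have hconst' : ∀ k, 1 ≤ k → k + 1 + 1 < n → σ k = σ (k+1) + 1 → σ (k+1) = σ (k+1+1) + 1 := by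
    intro k h1 h2 hdn
    rcases hstep (k+1) (by omega) (by omega) with h | h
    · have heq : σ (k+1+1) = σ k := by omega
      have := hσinj (k+1+1) k (by omega) (by omega) h1 (by omega) heq
      omega
    · exact h
  rcases hstep 1 le_rfl (by omega) with hup | hdn
  · have hupAll : ∀ k, 1 ≤ k → k + 1 < n → σ (k+1) = σ k + 1 := by
      intro k
      induction k with
      | zero => omega
      | succ m ih =>
        intro _ h2
        rcases Nat.eq_zero_or_pos m with rfl | hm
        · exact hup
        · exact hconst m hm (by omega) (ih hm (by omega))
    have hval : ∀ k, 1 ≤ k → k < n → σ k = σ 1 + k - 1 := by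
      intro k
      induction k with
      | zero => omega
      | succ m ih =>
        intro _ h2
        rcases Nat.eq_zero_or_pos m with rfl | hm
        · show σ 1 = σ 1 + 1 - 1
          omega
        · have h3 := hupAll m hm h2
          have h4 := ih hm (by omega)
          omega
    have l1 := hloop 1 le_rfl (by omega)
    have b1 := (hσA 1 le_rfl (by omega)).2.2
    have v2 := hval (n-1) (by omega) (by omega)
    have b2 := (hσA (n-1) (by omega) (by omega)).2.2
    omega
  · have hdnAll : ∀ k, 1 ≤ k → k + 1 < n → σ k = σ (k+1) + 1 := by
      intro k
      induction k with
      | zero => omega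
      | succ m ih =>
        intro _ h2
        rcases Nat.eq_zero_or_pos m with rfl | hm
        · exact hdn
        · exact hconst' m hm (by omega) (ih hm (by omega))
    have hval : ∀ k, 1 ≤ k → k < n → σ k + k = σ 1 + 1 := by
      intro k
      induction k with
      | zero => omega
      | succ m ih =>
        intro _ h2
        rcases Nat.eq_zero_or_pos m with rfl | hm
        · show σ 1 + 1 = σ 1 + 1
          rfl
        · have h3 := hdnAll m hm h2
          have h4 := ih hm (by omega)
          omega
    have b1 := (hσA 1 le_rfl (by omega)).2.2
    have v2 := hval (n-1) (by omega) (by omega)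
    have vh := hval (n/2) (by omega) (by omega)
    have lh := hloop (n/2) (by omega) (by omega)
    omega

private lemma main_aux (A : W → W → Prop) (hA : IsTwoTwo A) {n : ℕ} (hn : 3 ≤ n) (w : ℕ → W)
    (hinj : ∀ i j, i < n → j < n → w i = w j → i = j)
    (hadj : ∀ k, k + 1 < n →
      (∃ x, A (w k) x ∧ A (w (k+1)) x) ∧ (∃ y, A y (w k) ∧ A y (w (k+1))))
    (hsurj : ∀ x : W, ∃ k, k < n ∧ x = w k)
    (hk0 : ∃ i, i + 1 < n ∧ A (w i) (w 0) ∧ A (w (i+1)) (w 0))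
    (hkN : ∃ i, i + 1 < n ∧ A (w i) (w (n-1)) ∧ A (w (i+1)) (w (n-1))) :
    ∃ z, A z (w 0) ∧ A z (w (n-1)) := by
  obtain ⟨u, hu1, hu2⟩ := nsrc_aux A hA hn w hinj hadj hk0
  have hinj' : ∀ i j, i < n → j < n → w (n-1-i) = w (n-1-j) → i = j := by
    intro i j hi hj he
    have := hinj (n-1-i) (n-1-j) (by omega) (by omega) he
    omega
  have hadj' : ∀ k, k + 1 < n →
      (∃ x, A (w (n-1-k)) x ∧ A (w (n-1-(k+1))) x) ∧
      (∃ y, A y (w (n-1-k)) ∧ A y (w (n-1-(k+1)))) := by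
    intro k hk
    have e1 : n-2-k+1 = n-1-k := by omega
    have e2 : n-1-(k+1) = n-2-k := by omega
    have h := hadj (n-2-k) (by omega)
    rw [e1] at h
    constructor
    · obtain ⟨x, a, b⟩ := h.1
      exact ⟨x, b, by rw [e2]; exact a⟩
    · obtain ⟨y, a, b⟩ := h.2
      exact ⟨y, b, by rw [e2]; exact a⟩
  have hk0' : ∃ i, i + 1 < n ∧ A (w (n-1-i)) (w (n-1-0)) ∧ A (w (n-1-(i+1))) (w (n-1-0)) := by
    obtain ⟨i, hi, a, b⟩ := hkN
    refine ⟨n-2-i, by omega, ?_, ?_⟩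
    · rw [show n-1-(n-2-i) = i+1 by omega, show n-1-0 = n-1 by omega]
      exact b
    · rw [show n-1-(n-2-i+1) = i by omega, show n-1-0 = n-1 by omega]
      exact a
  obtain ⟨u', hu1', hu2'⟩ := nsrc_aux A hA hn (fun k => w (n-1-k)) hinj' hadj' hk0'
  rw [show n-1-0 = n-1 by omega] at hu1'
  have hu2'' : ∀ i, i + 1 < n → ¬ (A u' (w i) ∧ A u' (w (i+1))) := by
    intro i hi hc
    refine hu2' (n-2-i) (by omega) ⟨?_, ?_⟩
    · show A u' (w (n-1-(n-2-i)))
      rw [show n-1-(n-2-i) = i+1 by omega]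
      exact hc.2
    · show A u' (w (n-1-(n-2-i+1)))
      rw [show n-1-(n-2-i+1) = i by omega]
      exact hc.1
  have heq := pigeon_aux A hA hn w hinj hadj hsurj u u' hu2 hu2''
  exact ⟨u, hu1, heq ▸ hu1'⟩

end AuxProof

theorem stmt4 (n : ℕ) (hn : 2 ≤ n) (W : Type*) (A : W → W → Prop)
    (hA : IsTwoTwo A) : ¬ Nonempty (SimpleGraph.pathGraph n ≃g CCE A) := by
  classical
  rintro ⟨φ⟩
  rcases (by omega : n = 2 ∨ 3 ≤ n) with rfl | hn3
  · -- n = 2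
    have hadj : (pathGraph 2).Adj 0 1 := pathGraph_adj.2 (Or.inl rfl)
    have hcce : (CCE A).Adj (φ 0) (φ 1) := φ.map_adj_iff.2 hadj
    obtain ⟨-, ⟨x, hx1, hx2⟩, -⟩ := hcce
    have hx : φ.symm x = 0 ∨ φ.symm x = 1 := by omega
    rcases hx with h | h
    · have : x = φ 0 := by rw [← h, φ.apply_symm_apply]
      rw [this] at hx1
      exact hA.1 _ hx1
    · have : x = φ 1 := by rw [← h, φ.apply_symm_apply]
      rw [this] at hx2
      exact hA.1 _ hx2
  · -- n ≥ 3
    set w : ℕ → W := fun k => φ ⟨k % n, Nat.mod_lt k (by omega)⟩ with hw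
    have hinj : ∀ i j, i < n → j < n → w i = w j → i = j := by
      intro i j hi hj he
      have := φ.toEquiv.injective he
      have : (⟨i % n, Nat.mod_lt i (by omega)⟩ : Fin n) = ⟨j % n, Nat.mod_lt j (by omega)⟩ := this
      rw [Fin.mk.injEq, Nat.mod_eq_of_lt hi, Nat.mod_eq_of_lt hj] at this
      exact this
    have hpadj : ∀ k, k + 1 < n → (CCE A).Adj (w k) (w (k+1)) := by
      intro k hk
      refine φ.map_adj_iff.2 (pathGraph_adj.2 (Or.inl ?_))
      show k % n + 1 = (k+1) % n
      rw [Nat.mod_eq_of_lt (by omega), Nat.mod_eq_of_lt (by omega)]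
    have hadj : ∀ k, k + 1 < n →
        (∃ x, A (w k) x ∧ A (w (k+1)) x) ∧ (∃ y, A y (w k) ∧ A y (w (k+1))) := by
      intro k hk
      obtain ⟨-, h1, h2⟩ := hpadj k hk
      exact ⟨h1, h2⟩
    have hsurj : ∀ x : W, ∃ k, k < n ∧ x = w k := by
      intro x
      refine ⟨(φ.symm x).val, (φ.symm x).isLt, ?_⟩
      show x = φ _
      rw [← φ.apply_symm_apply x]
      congr 1
      ext
      simp [Nat.mod_eq_of_lt (φ.symm x).isLt]
    -- reversed data
    have hinj' : ∀ i j, i < n → j < n → w (n-1-i) = w (n-1-j) → i = j := by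
      intro i j hi hj he
      have := hinj (n-1-i) (n-1-j) (by omega) (by omega) he
      omega
    have hadj' : ∀ k, k + 1 < n →
        (∃ x, A (w (n-1-k)) x ∧ A (w (n-1-(k+1))) x) ∧
        (∃ y, A y (w (n-1-k)) ∧ A y (w (n-1-(k+1)))) := by
      intro k hk
      have e1 : n-2-k+1 = n-1-k := by omega
      have e2 : n-1-(k+1) = n-2-k := by omega
      have h := hadj (n-2-k) (by omega)
      rw [e1] at h
      constructor
      · obtain ⟨x, a, b⟩ := h.1
        exact ⟨x, b, by rw [e2]; exact a⟩
      · obtain ⟨y, a, b⟩ := h.2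
        exact ⟨y, b, by rw [e2]; exact a⟩
    have hsurj' : ∀ x : W, ∃ k, k < n ∧ x = w (n-1-k) := by
      intro x
      obtain ⟨k, hk, he⟩ := hsurj x
      refine ⟨n-1-k, by omega, ?_⟩
      rw [show n-1-(n-1-k) = k by omega]
      exact he
    by_cases hS0 : ∃ i, i + 1 < n ∧ A (w 0) (w i) ∧ A (w 0) (w (i+1))
    · by_cases hSN : ∃ i, i + 1 < n ∧ A (w (n-1)) (w i) ∧ A (w (n-1)) (w (i+1))
      · by_cases hT0 : ∃ i, i + 1 < n ∧ A (w i) (w 0) ∧ A (w (i+1)) (w 0)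
        · by_cases hTN : ∃ i, i + 1 < n ∧ A (w i) (w (n-1)) ∧ A (w (i+1)) (w (n-1))
          · -- main case
            obtain ⟨z, hz1, hz2⟩ := main_aux A hA hn3 w hinj hadj hsurj hT0 hTN
            have hadjf : ∀ k, k + 1 < n →
                (∃ x, A x (w k) ∧ A x (w (k+1))) ∧ (∃ y, A (w k) y ∧ A (w (k+1)) y) := by
              intro k hk
              exact ⟨(hadj k hk).2, (hadj k hk).1⟩
            obtain ⟨z', hz1', hz2'⟩ :=
              main_aux (fun a b => A b a) (flip_twoTwo hA) hn3 w hinj hadjf hsurj hS0 hSN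
            have hne : w 0 ≠ w (n-1) := fun h => by
              have := hinj 0 (n-1) (by omega) (by omega) h
              omega
            have hcce : (CCE A).Adj (w 0) (w (n-1)) :=
              ⟨hne, ⟨z', hz1', hz2'⟩, ⟨z, hz1, hz2⟩⟩
            have := φ.map_adj_iff.1 hcce
            rw [pathGraph_adj] at this
            simp only [Nat.mod_eq_of_lt (show (0:ℕ) < n by omega),
              Nat.mod_eq_of_lt (show n-1 < n by omega)] at this
            omega
          · refine deg_aux (fun a b => A b a) (flip_twoTwo hA) hn3 (fun k => w (n-1-k)) hinj'
              (fun k hk => ⟨((hadj' k hk).2.imp fun y hy => ⟨hy.1, hy.2⟩ : _),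
                ((hadj' k hk).1.imp fun x hx => ⟨hx.1, hx.2⟩ : _)⟩) hsurj' ?_
            intro i hi hc
            simp only [Nat.sub_zero] at hc
            refine hTN ⟨n-2-i, by omega, ?_, ?_⟩
            · rw [show n-2-i = n-1-(i+1) by omega]
              exact hc.2
            · rw [show n-2-i+1 = n-1-i by omega]
              exact hc.1
        · refine deg_aux (fun a b => A b a) (flip_twoTwo hA) hn3 w hinj
            (fun k hk => ⟨(hadj k hk).2, (hadj k hk).1⟩) hsurj ?_
          intro i hi hc
          exact hT0 ⟨i, hi, hc.1, hc.2⟩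
      · refine deg_aux A hA hn3 (fun k => w (n-1-k)) hinj' hadj' hsurj' ?_
        intro i hi hc
        simp only [Nat.sub_zero] at hc
        refine hSN ⟨n-1-(i+1), by omega, ?_, ?_⟩
        · exact hc.2
        · rw [show n-1-(i+1)+1 = n-1-i by omega]
          exact hc.1
    · exact deg_aux A hA hn3 w hinj hadj hsurj (fun i hi hc => hS0 ⟨i, hi, hc⟩)
end

section
/- For every integer m ≥ 3 and every t with 1 ≤ t ≤ m−2, the digraph on vertices v_1,…,v_m (indices mod m) with arc set ∪_{k=1}^m {(v_k, v_{k+t}), (v_k, v_{k+t+1})} is a ⟨2,2⟩ digraph whose CCE graph is the cycle v_1 v_2 ⋯ v_m v_1. -/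
open SimpleGraph

theorem stmt5 (m t : ℕ) (hm : 3 ≤ m) (ht1 : 1 ≤ t) (ht2 : t ≤ m - 2) :
    IsTwoTwo (fun k l : ZMod m => l = k + (t : ZMod m) ∨ l = k + (t : ZMod m) + 1) ∧
    CCE (fun k l : ZMod m => l = k + (t : ZMod m) ∨ l = k + (t : ZMod m) + 1) =
      SimpleGraph.fromRel (fun u v : ZMod m => v = u + 1) := by

  haveI : NeZero m := ⟨by omega⟩
  have htz : (t : ZMod m) ≠ 0 := by
    rw [Ne, ZMod.natCast_eq_zero_iff]
    intro h; have := Nat.le_of_dvd (by omega) h; omega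
  have htz1 : (t : ZMod m) + 1 ≠ 0 := by
    have h1 : ((t + 1 : ℕ) : ZMod m) ≠ 0 := by
      rw [Ne, ZMod.natCast_eq_zero_iff]
      intro h; have := Nat.le_of_dvd (by omega) h; omega
    simpa using h1
  constructor
  · refine ⟨?_, ?_, ?_⟩
    · rintro v (h | h)
      · exact htz (left_eq_add.mp h)
      · exact htz1 (left_eq_add.mp (by rwa [add_assoc] at h))
    · intro v a b c ha hb hc
      rcases ha with rfl | rfl <;> rcases hb with rfl | rfl <;>
        rcases hc with rfl | rfl <;> simp
    · intro v a b c ha hb hc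
      have key : ∀ x : ZMod m, (v = x + (t : ZMod m) ∨ v = x + (t : ZMod m) + 1) →
          x = v - t ∨ x = v - t - 1 := by
        rintro x (h | h)
        · left; rw [h]; ring
        · right; rw [h]; ring
      rcases key a ha with rfl | rfl <;> rcases key b hb with rfl | rfl <;>
        rcases key c hc with rfl | rfl <;> simp
  · ext u v
    rw [SimpleGraph.fromRel_adj]
    constructor
    · rintro ⟨hne, ⟨x, hx1 | hx1, hx2 | hx2⟩, -⟩
      · exact absurd (add_right_cancel (hx1.symm.trans hx2)) hne
      · refine ⟨hne, Or.inr (add_right_cancel (b := (t : ZMod m)) ?_)⟩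
        rw [← hx1, hx2]; ring
      · refine ⟨hne, Or.inl (add_right_cancel (b := (t : ZMod m)) ?_)⟩
        rw [← hx2, hx1]; ring
      · exact absurd (add_right_cancel (add_right_cancel (hx1.symm.trans hx2))) hne
    · rintro ⟨hne, h | h⟩
      · exact ⟨hne, ⟨u + t + 1, Or.inr rfl, Or.inl (by rw [h]; ring)⟩,
          ⟨u - t, Or.inl (by ring), Or.inr (by rw [h]; ring)⟩⟩
      · exact ⟨hne, ⟨v + t + 1, Or.inl (by rw [h]; ring), Or.inr rfl⟩,
          ⟨v - t, Or.inr (by rw [h]; ring), Or.inl (by ring)⟩⟩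
end

section
/- Every cycle of length at least 3 is the CCE graph of some ⟨2,2⟩ digraph. -/
open SimpleGraph

theorem stmt6 (n : ℕ) (hn : 3 ≤ n) :
    IsTwoTwoCCE (SimpleGraph.cycleGraph n) := by
  haveI : NeZero n := ⟨by omega⟩
  letI := Fin.instCommRing n
  have hv1 : ((1 : Fin n)).val = 1 := by
    have h : ((1:ℕ) : Fin n) = (1 : Fin n) := by push_cast; ring
    rw [← h, Fin.val_natCast, Nat.mod_eq_of_lt (by omega)]
  have hv2 : ((2 : Fin n)).val = 2 := by
    have h : ((2:ℕ) : Fin n) = (2 : Fin n) := by push_cast; ring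
    rw [← h, Fin.val_natCast, Nat.mod_eq_of_lt (by omega)]
  have h10 : (1 : Fin n) ≠ 0 := by
    intro he; have := congrArg Fin.val he; simp [hv1] at this; omega
  have h20 : (2 : Fin n) ≠ 0 := by
    intro he; have := congrArg Fin.val he; simp [hv2] at this
    rw [Nat.mod_eq_of_lt (by omega)] at this; omega
  set A : Fin n → Fin n → Prop := fun u v => v = u + 1 ∨ v = u + 2 with hA
  have hadj : ∀ u v : Fin n, (SimpleGraph.cycleGraph n).Adj u v ↔ (u - v = 1 ∨ v - u = 1) := by
    intro u v
    rw [SimpleGraph.cycleGraph_adj']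
    simp [Fin.ext_iff, hv1, Nat.mod_eq_of_lt (show 1 < n by omega)]
  have hin : ∀ w v : Fin n, A w v → w = v - 1 ∨ w = v - 2 := by
    rintro w v (h | h)
    · left; linear_combination -h
    · right; linear_combination -h
  refine ⟨Fin n, A, ⟨?_, ?_, ?_⟩, ⟨⟨Equiv.refl _, ?_⟩⟩⟩
  · rintro v (h | h)
    · exact h10 (by linear_combination -h)
    · exact h20 (by linear_combination -h)
  · intro v a b c ha hb hc
    rcases ha with rfl | rfl <;> rcases hb with rfl | rfl <;>
      rcases hc with rfl | rfl <;> simp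
  · intro v a b c ha hb hc
    rcases hin a v ha with rfl | rfl <;> rcases hin b v hb with rfl | rfl <;>
      rcases hin c v hc with rfl | rfl <;> simp
  · intro u v
    simp only [Equiv.refl_apply]
    rw [hadj]
    constructor
    · rintro ⟨hne, ⟨x, hux, hvx⟩, -⟩
      rcases hux with rfl | rfl <;> rcases hvx with h | h
      · exact absurd (by linear_combination h) hne
      · left; linear_combination h
      · right; linear_combination -h
      · exact absurd (by linear_combination h) hne
    · rintro (h | h)
      · exact ⟨fun he => h10 (by linear_combination he - h),
          ⟨v + 2, Or.inl (by linear_combination -h), Or.inr rfl⟩,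
          ⟨v - 1, Or.inr (by linear_combination h), Or.inl (by ring)⟩⟩
      · exact ⟨fun he => h10 (by linear_combination -h - he),
          ⟨u + 2, Or.inr rfl, Or.inl (by linear_combination -h)⟩,
          ⟨u - 1, Or.inl (by ring), Or.inr (by linear_combination h)⟩⟩
end

section
/- For all positive integers m and n, the disjoint union of two copies of the path on m vertices and one path on n vertices (2P_m ∪ P_n) is the CCE graph of some ⟨2,2⟩ digraph. -/
open SimpleGraph

def Rrel (m n : ℕ) (x y : ℕ) : Prop :=
  (x < m ∧ m ≤ y ∧ y < m + m ∧
    (y = x + m + 1 ∨ y = x + m + 2 ∨ (x + 1 = m ∧ (y = m ∨ y = m + 1)) ∨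
      (x + 2 = m ∧ y = m))) ∨
  (m ≤ x ∧ x < m + m ∧ y < m ∧ (y + m = x + 1 ∨ y + m = x + 2)) ∨
  (m + m ≤ x ∧ m + m ≤ y ∧ (y = x + 1 ∨ y = x + 2)) ∨
  (m + m ≤ x ∧ y < m ∧
    ((x + 1 = m + m + n ∧ (y = 0 ∨ y = 1)) ∨ (x + 2 = m + m + n ∧ y = 0))) ∨
  (m ≤ x ∧ x < m + m ∧ m + m ≤ y ∧
    ((x + 1 = m + m ∧ (y = m + m ∨ y = m + m + 1)) ∨ (x + 2 = m + m ∧ y = m + m)))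

def enc (m n : ℕ) : Fin m ⊕ (Fin m ⊕ Fin n) → ℕ
  | .inl i => i.1
  | .inr (.inl i) => m + i.1
  | .inr (.inr i) => m + m + i.1

def dec (m n : ℕ) (x : ℕ) (h : x < m + m + n) : Fin m ⊕ (Fin m ⊕ Fin n) :=
  if h1 : x < m then .inl ⟨x, h1⟩
  else if h2 : x < m + m then .inr (.inl ⟨x - m, by omega⟩)
  else .inr (.inr ⟨x - m - m, by omega⟩)

lemma enc_dec (m n x : ℕ) (h : x < m + m + n) : enc m n (dec m n x h) = x := by
  unfold dec
  split_ifs <;> simp only [enc] <;> omega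

lemma enc_lt (m n : ℕ) (v : Fin m ⊕ (Fin m ⊕ Fin n)) : enc m n v < m + m + n := by
  rcases v with i | i | i <;> simp only [enc] <;> (first | (have := i.2; omega))

lemma enc_inj (m n : ℕ) {u v : Fin m ⊕ (Fin m ⊕ Fin n)} (h : enc m n u = enc m n v) :
    u = v := by
  rcases u with i | i | i <;> rcases v with j | j | j <;> simp only [enc] at h <;>
    have hi := i.2 <;> have hj := j.2
  · exact congrArg Sum.inl (Fin.ext (by omega))
  · omega
  · omega
  · omega
  · exact congrArg (Sum.inr ∘ Sum.inl) (Fin.ext (by omega))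
  · omega
  · omega
  · omega
  · exact congrArg (Sum.inr ∘ Sum.inr) (Fin.ext (by omega))

lemma Rrel_irrefl (m n x : ℕ) : ¬ Rrel m n x x := by unfold Rrel; omega

set_option maxHeartbeats 1000000 in
lemma Rrel_out (m n x y₁ y₂ y₃ : ℕ) (b₁ : y₁ < m + m + n) (b₂ : y₂ < m + m + n)
    (b₃ : y₃ < m + m + n) (h₁ : Rrel m n x y₁) (h₂ : Rrel m n x y₂)
    (h₃ : Rrel m n x y₃) : y₁ = y₂ ∨ y₁ = y₃ ∨ y₂ = y₃ := by
  unfold Rrel at *; omega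

set_option maxHeartbeats 1000000 in
lemma Rrel_in (m n x₁ x₂ x₃ y : ℕ) (b₁ : x₁ < m + m + n) (b₂ : x₂ < m + m + n)
    (b₃ : x₃ < m + m + n) (h₁ : Rrel m n x₁ y) (h₂ : Rrel m n x₂ y)
    (h₃ : Rrel m n x₃ y) : x₁ = x₂ ∨ x₁ = x₃ ∨ x₂ = x₃ := by
  unfold Rrel at *; omega

set_option maxHeartbeats 4000000 in
lemma Rrel_key (m n u v x y : ℕ) (hm : 1 ≤ m) (hn : 1 ≤ n)
    (hu : u < m + m + n) (hv : v < m + m + n) (hx : x < m + m + n) (hy : y < m + m + n)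
    (huv : u ≠ v) (h₁ : Rrel m n u x) (h₂ : Rrel m n v x)
    (h₃ : Rrel m n y u) (h₄ : Rrel m n y v) :
    (u < m ∧ v < m ∧ (u + 1 = v ∨ v + 1 = u)) ∨
    (m ≤ u ∧ u < m + m ∧ m ≤ v ∧ v < m + m ∧ (u + 1 = v ∨ v + 1 = u)) ∨
    (m + m ≤ u ∧ m + m ≤ v ∧ (u + 1 = v ∨ v + 1 = u)) := by
  unfold Rrel at *; omega

set_option maxHeartbeats 1000000 in
lemma Rrel_witness (m n u v : ℕ) (hm : 1 ≤ m) (hn : 1 ≤ n)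
    (h : (v < m ∧ u + 1 = v) ∨ (m ≤ u ∧ v < m + m ∧ u + 1 = v) ∨
      (m + m ≤ u ∧ v < m + m + n ∧ u + 1 = v)) :
    ∃ x, x < m + m + n ∧ Rrel m n u x ∧ Rrel m n v x ∧
      ∃ y, y < m + m + n ∧ Rrel m n y u ∧ Rrel m n y v := by
  rcases h with ⟨h2, h3⟩ | ⟨h1, h2, h3⟩ | ⟨h1, h2, h3⟩
  · by_cases hc : u + 2 < m
    · refine ⟨m + u + 2, by omega,
        Or.inl ⟨by omega, by omega, by omega, Or.inr (Or.inl (by omega))⟩,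
        Or.inl ⟨by omega, by omega, by omega, Or.inl (by omega)⟩, ?_⟩
      by_cases hd : 1 ≤ u
      · exact ⟨m + u - 1, by omega,
          Or.inr (Or.inl ⟨by omega, by omega, by omega, Or.inl (by omega)⟩),
          Or.inr (Or.inl ⟨by omega, by omega, by omega, Or.inr (by omega)⟩)⟩
      · exact ⟨m + m + n - 1, by omega,
          Or.inr (Or.inr (Or.inr (Or.inl ⟨by omega, by omega,
            Or.inl ⟨by omega, Or.inl (by omega)⟩⟩))),
          Or.inr (Or.inr (Or.inr (Or.inl ⟨by omega, by omega,
            Or.inl ⟨by omega, Or.inr (by omega)⟩⟩)))⟩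
    · refine ⟨m, by omega,
        Or.inl ⟨by omega, by omega, by omega, Or.inr (Or.inr (Or.inr ⟨by omega, by omega⟩))⟩,
        Or.inl ⟨by omega, by omega, by omega, Or.inr (Or.inr (Or.inl ⟨by omega,
          Or.inl (by omega)⟩))⟩, ?_⟩
      by_cases hd : 1 ≤ u
      · exact ⟨m + u - 1, by omega,
          Or.inr (Or.inl ⟨by omega, by omega, by omega, Or.inl (by omega)⟩),
          Or.inr (Or.inl ⟨by omega, by omega, by omega, Or.inr (by omega)⟩)⟩
      · exact ⟨m + m + n - 1, by omega,
          Or.inr (Or.inr (Or.inr (Or.inl ⟨by omega, by omega,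
            Or.inl ⟨by omega, Or.inl (by omega)⟩⟩))),
          Or.inr (Or.inr (Or.inr (Or.inl ⟨by omega, by omega,
            Or.inl ⟨by omega, Or.inr (by omega)⟩⟩)))⟩
  · by_cases hc : u + 2 < m + m
    · refine ⟨u + 2 - m, by omega,
        Or.inr (Or.inl ⟨by omega, by omega, by omega, Or.inr (by omega)⟩),
        Or.inr (Or.inl ⟨by omega, by omega, by omega, Or.inl (by omega)⟩), ?_⟩
      by_cases hd : m + 1 ≤ u
      · exact ⟨u - m - 1, by omega,
          Or.inl ⟨by omega, by omega, by omega, Or.inl (by omega)⟩,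
          Or.inl ⟨by omega, by omega, by omega, Or.inr (Or.inl (by omega))⟩⟩
      · exact ⟨m - 1, by omega,
          Or.inl ⟨by omega, by omega, by omega, Or.inr (Or.inr (Or.inl ⟨by omega,
            Or.inl (by omega)⟩))⟩,
          Or.inl ⟨by omega, by omega, by omega, Or.inr (Or.inr (Or.inl ⟨by omega,
            Or.inr (by omega)⟩))⟩⟩
    · refine ⟨m + m, by omega,
        Or.inr (Or.inr (Or.inr (Or.inr ⟨by omega, by omega, by omega,
          Or.inr ⟨by omega, by omega⟩⟩))),
        Or.inr (Or.inr (Or.inr (Or.inr ⟨by omega, by omega, by omega,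
          Or.inl ⟨by omega, Or.inl (by omega)⟩⟩))), ?_⟩
      by_cases hd : m + 1 ≤ u
      · exact ⟨u - m - 1, by omega,
          Or.inl ⟨by omega, by omega, by omega, Or.inl (by omega)⟩,
          Or.inl ⟨by omega, by omega, by omega, Or.inr (Or.inl (by omega))⟩⟩
      · exact ⟨m - 1, by omega,
          Or.inl ⟨by omega, by omega, by omega, Or.inr (Or.inr (Or.inl ⟨by omega,
            Or.inl (by omega)⟩))⟩,
          Or.inl ⟨by omega, by omega, by omega, Or.inr (Or.inr (Or.inl ⟨by omega,
            Or.inr (by omega)⟩))⟩⟩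
  · by_cases hc : u + 2 < m + m + n
    · refine ⟨u + 2, by omega,
        Or.inr (Or.inr (Or.inl ⟨by omega, by omega, Or.inr (by omega)⟩)),
        Or.inr (Or.inr (Or.inl ⟨by omega, by omega, Or.inl (by omega)⟩)), ?_⟩
      by_cases hd : m + m + 1 ≤ u
      · exact ⟨u - 1, by omega,
          Or.inr (Or.inr (Or.inl ⟨by omega, by omega, Or.inl (by omega)⟩)),
          Or.inr (Or.inr (Or.inl ⟨by omega, by omega, Or.inr (by omega)⟩))⟩
      · exact ⟨m + m - 1, by omega,
          Or.inr (Or.inr (Or.inr (Or.inr ⟨by omega, by omega, by omega,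
            Or.inl ⟨by omega, Or.inl (by omega)⟩⟩))),
          Or.inr (Or.inr (Or.inr (Or.inr ⟨by omega, by omega, by omega,
            Or.inl ⟨by omega, Or.inr (by omega)⟩⟩)))⟩
    · refine ⟨0, by omega,
        Or.inr (Or.inr (Or.inr (Or.inl ⟨by omega, by omega,
          Or.inr ⟨by omega, by omega⟩⟩))),
        Or.inr (Or.inr (Or.inr (Or.inl ⟨by omega, by omega,
          Or.inl ⟨by omega, Or.inl (by omega)⟩⟩))), ?_⟩
      by_cases hd : m + m + 1 ≤ u
      · exact ⟨u - 1, by omega,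
          Or.inr (Or.inr (Or.inl ⟨by omega, by omega, Or.inl (by omega)⟩)),
          Or.inr (Or.inr (Or.inl ⟨by omega, by omega, Or.inr (by omega)⟩))⟩
      · exact ⟨m + m - 1, by omega,
          Or.inr (Or.inr (Or.inr (Or.inr ⟨by omega, by omega, by omega,
            Or.inl ⟨by omega, Or.inl (by omega)⟩⟩))),
          Or.inr (Or.inr (Or.inr (Or.inr ⟨by omega, by omega, by omega,
            Or.inl ⟨by omega, Or.inr (by omega)⟩⟩)))⟩

example : True := trivial

theorem stmt9 (m n : ℕ) (hm : 1 ≤ m) (hn : 1 ≤ n) :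
    IsTwoTwoCCE (SimpleGraph.pathGraph m ⊕g
      (SimpleGraph.pathGraph m ⊕g SimpleGraph.pathGraph n)) := by
  refine ⟨Fin m ⊕ (Fin m ⊕ Fin n),
    fun u v => Rrel m n (enc m n u) (enc m n v), ⟨?_, ?_, ?_⟩, ⟨⟨Equiv.refl _, ?_⟩⟩⟩
  · exact fun v => Rrel_irrefl m n _
  · intro v a b c h1 h2 h3
    rcases Rrel_out m n _ _ _ _ (enc_lt m n a) (enc_lt m n b) (enc_lt m n c) h1 h2 h3
      with h | h | h
    exacts [Or.inl (enc_inj m n h), Or.inr (Or.inl (enc_inj m n h)),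
      Or.inr (Or.inr (enc_inj m n h))]
  · intro v a b c h1 h2 h3
    rcases Rrel_in m n _ _ _ _ (enc_lt m n a) (enc_lt m n b) (enc_lt m n c) h1 h2 h3
      with h | h | h
    exacts [Or.inl (enc_inj m n h), Or.inr (Or.inl (enc_inj m n h)),
      Or.inr (Or.inr (enc_inj m n h))]
  · intro a b
    simp only [Equiv.refl_apply]
    constructor
    · rintro ⟨hne, ⟨x, hx1, hx2⟩, ⟨y, hy1, hy2⟩⟩
      have key := Rrel_key m n (enc m n a) (enc m n b) (enc m n x) (enc m n y) hm hn
        (enc_lt m n a) (enc_lt m n b) (enc_lt m n x) (enc_lt m n y)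
        (fun h => hne (enc_inj m n h)) hx1 hx2 hy1 hy2
      rcases a with i | i | i <;> rcases b with j | j | j <;>
        simp only [enc] at key <;>
        simp only [SimpleGraph.sum_adj, SimpleGraph.pathGraph_adj] <;>
        have hi := i.2 <;> have hj := j.2 <;> omega
    · intro hadj
      rcases a with i | i | i <;> rcases b with j | j | j <;>
        simp only [SimpleGraph.sum_adj, SimpleGraph.pathGraph_adj] at hadj
      · rcases hadj with h | h
        · obtain ⟨x, hxl, hx1, hx2, y, hyl, hy1, hy2⟩ :=
            Rrel_witness m n i.1 j.1 hm hn (Or.inl ⟨j.2, h⟩)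
          refine ⟨fun hh => ?_, ⟨dec m n x hxl, ?_, ?_⟩, ⟨dec m n y hyl, ?_, ?_⟩⟩ <;>
            [skip; skip; skip; skip; skip]
          · have := congrArg (enc m n) hh; simp only [enc] at this; omega
          · simp only [enc_dec]; exact hx1
          · simp only [enc_dec]; exact hx2
          · simp only [enc_dec]; exact hy1
          · simp only [enc_dec]; exact hy2
        · obtain ⟨x, hxl, hx1, hx2, y, hyl, hy1, hy2⟩ :=
            Rrel_witness m n j.1 i.1 hm hn (Or.inl ⟨i.2, h⟩)
          refine ⟨fun hh => ?_, ⟨dec m n x hxl, ?_, ?_⟩, ⟨dec m n y hyl, ?_, ?_⟩⟩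
          · have := congrArg (enc m n) hh; simp only [enc] at this; omega
          · simp only [enc_dec]; exact hx2
          · simp only [enc_dec]; exact hx1
          · simp only [enc_dec]; exact hy2
          · simp only [enc_dec]; exact hy1
      · rcases hadj with h | h
        · obtain ⟨x, hxl, hx1, hx2, y, hyl, hy1, hy2⟩ :=
            Rrel_witness m n (m + i.1) (m + j.1) hm hn
              (Or.inr (Or.inl ⟨by omega, by have := j.2; omega, by omega⟩))
          refine ⟨fun hh => ?_, ⟨dec m n x hxl, ?_, ?_⟩, ⟨dec m n y hyl, ?_, ?_⟩⟩
          · have := congrArg (enc m n) hh; simp only [enc] at this; omega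
          · simp only [enc_dec]; exact hx1
          · simp only [enc_dec]; exact hx2
          · simp only [enc_dec]; exact hy1
          · simp only [enc_dec]; exact hy2
        · obtain ⟨x, hxl, hx1, hx2, y, hyl, hy1, hy2⟩ :=
            Rrel_witness m n (m + j.1) (m + i.1) hm hn
              (Or.inr (Or.inl ⟨by omega, by have := i.2; omega, by omega⟩))
          refine ⟨fun hh => ?_, ⟨dec m n x hxl, ?_, ?_⟩, ⟨dec m n y hyl, ?_, ?_⟩⟩
          · have := congrArg (enc m n) hh; simp only [enc] at this; omega
          · simp only [enc_dec]; exact hx2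
          · simp only [enc_dec]; exact hx1
          · simp only [enc_dec]; exact hy2
          · simp only [enc_dec]; exact hy1
      · rcases hadj with h | h
        · obtain ⟨x, hxl, hx1, hx2, y, hyl, hy1, hy2⟩ :=
            Rrel_witness m n (m + m + i.1) (m + m + j.1) hm hn
              (Or.inr (Or.inr ⟨by omega, by have := j.2; omega, by omega⟩))
          refine ⟨fun hh => ?_, ⟨dec m n x hxl, ?_, ?_⟩, ⟨dec m n y hyl, ?_, ?_⟩⟩
          · have := congrArg (enc m n) hh; simp only [enc] at this; omega
          · simp only [enc_dec]; exact hx1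
          · simp only [enc_dec]; exact hx2
          · simp only [enc_dec]; exact hy1
          · simp only [enc_dec]; exact hy2
        · obtain ⟨x, hxl, hx1, hx2, y, hyl, hy1, hy2⟩ :=
            Rrel_witness m n (m + m + j.1) (m + m + i.1) hm hn
              (Or.inr (Or.inr ⟨by omega, by have := i.2; omega, by omega⟩))
          refine ⟨fun hh => ?_, ⟨dec m n x hxl, ?_, ?_⟩, ⟨dec m n y hyl, ?_, ?_⟩⟩
          · have := congrArg (enc m n) hh; simp only [enc] at this; omega
          · simp only [enc_dec]; exact hx2
          · simp only [enc_dec]; exact hx1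
          · simp only [enc_dec]; exact hy2
          · simp only [enc_dec]; exact hy1
end

section
/- Let D be a minimal (2,2) digraph realizing its CCE graph G. Then any two distinct vertices of D have at most one common prey and at most one common predator. -/
open SimpleGraph

lemma cce_flip {V : Type*} (A : V → V → Prop) : CCE (flip A) = CCE A := by
  ext a b
  constructor
  · rintro ⟨h, ⟨x, hx1, hx2⟩, ⟨y, hy1, hy2⟩⟩
    exact ⟨h, ⟨y, hy1, hy2⟩, ⟨x, hx1, hx2⟩⟩
  · rintro ⟨h, ⟨x, hx1, hx2⟩, ⟨y, hy1, hy2⟩⟩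
    exact ⟨h, ⟨y, hy1, hy2⟩, ⟨x, hx1, hx2⟩⟩

lemma minimal_flip {V : Type*} (A : V → V → Prop) (hA : MinimalTwoTwoAcyclic A) :
    MinimalTwoTwoAcyclic (flip A) := by
  obtain ⟨⟨⟨hl, ho, hi⟩, hac⟩, hm⟩ := hA
  refine ⟨⟨⟨fun w hw => hl w hw, fun w a b c ha hb hc => hi w a b c ha hb hc,
      fun w a b c ha hb hc => ho w a b c ha hb hc⟩, ?_⟩, ?_⟩
  · intro w hw
    exact hac w (Relation.transGen_swap.mp hw)
  · intro A' hsub hcce a b hab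
    exact hm (flip A') (fun p q h => hsub q p h)
      (by rw [cce_flip, hcce, cce_flip]) b a hab

lemma prey_unique {V : Type*} (A : V → V → Prop) (hA : MinimalTwoTwoAcyclic A)
    (u v : V) (huv : u ≠ v) (x y : V) (hux : A u x) (hvx : A v x) (huy : A u y)
    (hvy : A v y) : x = y := by
  by_contra hxy
  obtain ⟨⟨⟨hl, ho, hi⟩, hac⟩, hm⟩ := hA
  set A' : V → V → Prop := fun a b => A a b ∧ ¬(a = v ∧ b = y) with hA'
  have hcce : CCE A' = CCE A := by
    ext a b
    constructor
    · rintro ⟨h, ⟨p, hp1, hp2⟩, ⟨q, hq1, hq2⟩⟩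
      exact ⟨h, ⟨p, hp1.1, hp2.1⟩, ⟨q, hq1.1, hq2.1⟩⟩
    · rintro ⟨h, ⟨p, hp1, hp2⟩, ⟨q, hq1, hq2⟩⟩
      refine ⟨h, ?_, ?_⟩
      · by_cases hap : a = v ∧ p = y
        · obtain ⟨rfl, rfl⟩ := hap
          have hb : u = b := by
            rcases hi p u a b huy hvy hp2 with h' | h' | h'
            · exact absurd h' huv
            · exact h'
            · exact absurd h' h
          subst hb
          exact ⟨x, ⟨hvx, fun hc => hxy hc.2⟩, ⟨hux, fun hc => huv hc.1⟩⟩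
        · by_cases hbp : b = v ∧ p = y
          · obtain ⟨rfl, rfl⟩ := hbp
            have ha2 : u = a := by
              rcases hi p u b a huy hvy hp1 with h' | h' | h'
              · exact absurd h' huv
              · exact h'
              · exact absurd h'.symm h
            subst ha2
            exact ⟨x, ⟨hux, fun hc => huv hc.1⟩, ⟨hvx, fun hc => hxy hc.2⟩⟩
          · exact ⟨p, ⟨hp1, hap⟩, ⟨hp2, hbp⟩⟩
      · by_cases hqv : q = v
        · subst hqv
          by_cases hay : a = y
          · subst hay
            have hbx : x = b := by
              rcases ho q x a b hvx hvy hq2 with h' | h' | h'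
              · exact absurd h' hxy
              · exact h'
              · exact absurd h' h
            subst hbx
            exact ⟨u, ⟨huy, fun hc => huv hc.1⟩, ⟨hux, fun hc => huv hc.1⟩⟩
          · by_cases hby : b = y
            · subst hby
              have hax : x = a := by
                rcases ho q x b a hvx hvy hq1 with h' | h' | h'
                · exact absurd h' hxy
                · exact h'
                · exact absurd h'.symm h
              subst hax
              exact ⟨u, ⟨hux, fun hc => huv hc.1⟩, ⟨huy, fun hc => huv hc.1⟩⟩
            · exact ⟨q, ⟨hq1, fun hc => hay hc.2⟩, ⟨hq2, fun hc => hby hc.2⟩⟩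
        · exact ⟨q, ⟨hq1, fun hc => hqv hc.1⟩, ⟨hq2, fun hc => hqv hc.1⟩⟩
  have := hm A' (fun _ _ h => h.1) hcce v y hvy
  exact this.2 ⟨rfl, rfl⟩

theorem stmt16 {V : Type*} (A : V → V → Prop) (hA : MinimalTwoTwoAcyclic A)
    (u v : V) (huv : u ≠ v) :
    (∀ x y, A u x → A v x → A u y → A v y → x = y) ∧
    (∀ x y, A x u → A x v → A y u → A y v → x = y) := by
  constructor
  · intro x y hux hvx huy hvy
    exact prey_unique A hA u v huv x y hux hvx huy hvy
  · intro x y hxu hxv hyu hyv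
    exact prey_unique (flip A) (minimal_flip A hA) u v huv x y hxu hxv hyu hyv
end

section
/- Let D be a minimal (2,2) digraph realizing its CCE graph G. If a vertex v of D has two in-neighbors w and x, then either v has degree 2 in G or w and x are adjacent in G. -/
open SimpleGraph

theorem stmt18 {V : Type*} (A : V → V → Prop) (hA : MinimalTwoTwoAcyclic A)
    (v w x : V) (hwx : w ≠ x) (hw : A w v) (hx : A x v) :
    (∃ a b, a ≠ b ∧ (CCE A).Adj v a ∧ (CCE A).Adj v b) ∨ (CCE A).Adj w x := by
  classical
  obtain ⟨⟨⟨hloop, hout, hin⟩, hacy⟩, hmin⟩ := hA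
  -- deleting any arc changes the CCE graph
  have key : ∀ s t, A s t → ∃ p q, (CCE A).Adj p q ∧
      ¬ (CCE (fun u u' => A u u' ∧ ¬(u = s ∧ u' = t))).Adj p q := by
    intro s t hst
    by_contra hc
    have hc' : ∀ p q, (CCE A).Adj p q →
        (CCE (fun u u' => A u u' ∧ ¬(u = s ∧ u' = t))).Adj p q := by
      intro p q h
      by_contra hn
      exact hc ⟨p, q, h, hn⟩
    have heq : CCE (fun u u' => A u u' ∧ ¬(u = s ∧ u' = t)) = CCE A := by
      apply SimpleGraph.ext
      ext p q
      constructor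
      · rintro ⟨hpq, ⟨z, hz1, hz2⟩, ⟨y, hy1, hy2⟩⟩
        exact ⟨hpq, ⟨z, hz1.1, hz2.1⟩, ⟨y, hy1.1, hy2.1⟩⟩
      · exact hc' p q
    exact (hmin _ (fun u u' h => h.1) heq s t hst).2 ⟨rfl, rfl⟩
  -- analysis of the arc s → v when v has another in-neighbor o
  have analyze : ∀ s o : V, s ≠ o → A s v → A o v →
      (CCE A).Adj s o ∨
      ∃ a, (CCE A).Adj v a ∧
        ¬ (CCE (fun u u' => A u u' ∧ ¬(u = s ∧ u' = v))).Adj v a := by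
    intro s o hso hs ho
    obtain ⟨p, q, hpq, hnpq⟩ := key s v hs
    obtain ⟨hne, ⟨z, hz1, hz2⟩, ⟨y, hy1, hy2⟩⟩ := hpq
    by_cases hout' : ∃ z', (A p z' ∧ ¬(p = s ∧ z' = v)) ∧ (A q z' ∧ ¬(q = s ∧ z' = v))
    · -- the common-in-neighbor witness must fail
      right
      have hin' : ¬ ∃ y', (A y' p ∧ ¬(y' = s ∧ p = v)) ∧ (A y' q ∧ ¬(y' = s ∧ q = v)) :=
        fun hy' => hnpq ⟨hne, hout', hy'⟩
      have hy : (y = s ∧ p = v) ∨ (y = s ∧ q = v) := by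
        by_contra hcon
        push_neg at hcon
        exact hin' ⟨y, ⟨hy1, fun h => hcon.1 h.1 h.2⟩, ⟨hy2, fun h => hcon.2 h.1 h.2⟩⟩
      rcases hy with ⟨hys, hpv⟩ | ⟨hys, hqv⟩
      · refine ⟨q, ⟨hpv ▸ hne, ⟨z, hpv ▸ hz1, hz2⟩, ⟨y, hpv ▸ hy1, hy2⟩⟩, ?_⟩
        intro h
        exact hnpq (hpv ▸ h)
      · refine ⟨p, ⟨(hqv ▸ hne).symm, ⟨z, hqv ▸ hz2, hz1⟩, ⟨y, hqv ▸ hy2, hy1⟩⟩, ?_⟩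
        intro h
        exact hnpq (hqv ▸ h.symm)
    · -- the common-out-neighbor witness fails: v is the unique common out-neighbor
      left
      have hz : (p = s ∧ z = v) ∨ (q = s ∧ z = v) := by
        by_contra hcon
        push_neg at hcon
        exact hout' ⟨z, ⟨hz1, fun h => hcon.1 h.1 h.2⟩, ⟨hz2, fun h => hcon.2 h.1 h.2⟩⟩
      rcases hz with ⟨hps, hzv⟩ | ⟨hqs, hzv⟩
      · -- p = s, and q is another in-neighbor of v, so q = o
        have hq : q = o ∨ q = s ∨ o = s := hin v q o s (hzv ▸ hz2) ho hs
        rcases hq with hq | hq | hq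
        · exact ⟨hso, ⟨v, hs, hq ▸ hzv ▸ hz2⟩, ⟨y, hps ▸ hy1, hq ▸ hy2⟩⟩
        · exact absurd (hps.trans hq.symm) hne
        · exact absurd hq.symm hso
      · -- q = s, and p is another in-neighbor of v, so p = o
        have hp : p = o ∨ p = s ∨ o = s := hin v p o s (hzv ▸ hz1) ho hs
        rcases hp with hp | hp | hp
        · exact ⟨hso, ⟨v, hs, hp ▸ hzv ▸ hz1⟩, ⟨y, hqs ▸ hy2, hp ▸ hy1⟩⟩
        · exact absurd (hp.trans hqs.symm) hne
        · exact absurd hp.symm hso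
  rcases analyze w x hwx hw hx with hadj | ⟨a, hva, hna⟩
  · exact Or.inr hadj
  rcases analyze x w hwx.symm hx hw with hadj | ⟨b, hvb, hnb⟩
  · exact Or.inr hadj.symm
  left
  refine ⟨a, b, ?_, hva, hvb⟩
  rintro rfl
  have hvw : v ≠ w := fun h => hloop w (h ▸ hw)
  have hvx : v ≠ x := fun h => hloop x (h ▸ hx)
  obtain ⟨hne, ⟨z, hz1, hz2⟩, ⟨y, hy1, hy2⟩⟩ := hva
  -- every common in-neighbor of v and a equals x (else the edge survives deleting x→v)
  have hxa : ∀ y', A y' v → A y' a → y' = x := by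
    intro y' hy'v hy'a
    by_contra hy'x
    exact hnb ⟨hne, ⟨z, ⟨hz1, fun h => hvx h.1⟩, ⟨hz2, fun h => hloop v (h.2 ▸ hz1)⟩⟩,
      ⟨y', ⟨hy'v, fun h => hy'x h.1⟩, ⟨hy'a, fun h => hy'x h.1⟩⟩⟩
  have hyx : y = x := hxa y hy1 hy2
  -- but then the edge v–a also survives deleting w→v, contradiction
  exact hna ⟨hne, ⟨z, ⟨hz1, fun h => hvw h.1⟩, ⟨hz2, fun h => hloop v (h.2 ▸ hz1)⟩⟩,
    ⟨y, ⟨hy1, fun h => hwx (hyx.symm.trans h.1).symm⟩,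
      ⟨hy2, fun h => hwx (hyx.symm.trans h.1).symm⟩⟩⟩
end
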